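/- arXiv:1810.08865 — 2 statements merged into one kernel-verified Lean document; each statement's English description precedes it below -/
import Mathlib

section
/- Let k ≥ 3. As permutations of the states of k+1 bit lines, the order of the product s_{k,k+1} ∘ C^k is 6. -/
/-- The underlying function of the gate `C^k`: flip each of the first `k` bits
precisely when the first `k` bits are all equal (all true or all false). -/
def ckFun (k N : ℕ) (x : Fin N → Bool) : Fin N → Bool :=
  fun j =>
    if (j : ℕ) < k ∧
        ((∀ i : Fin N, (i : ℕ) < k → x i = true) ∨ (∀ i : Fin N, (i : ℕ) < k → x i = false))
      then !(x j) else x j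

lemma ckFun_involutive (k N : ℕ) : Function.Involutive (ckFun k N) := by
  intro x
  by_cases h : (∀ i : Fin N, (i : ℕ) < k → x i = true) ∨ (∀ i : Fin N, (i : ℕ) < k → x i = false)
  · have hx : ∀ j : Fin N, ckFun k N x j = if (j : ℕ) < k then !(x j) else x j := by
      intro j
      by_cases hj : (j : ℕ) < k <;> simp [ckFun, hj, h]
    have h' : (∀ i : Fin N, (i : ℕ) < k → ckFun k N x i = true) ∨
        (∀ i : Fin N, (i : ℕ) < k → ckFun k N x i = false) := by
      rcases h with h | h
      · right; intro i hi; rw [hx]; simp [hi, h i hi]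
      · left; intro i hi; rw [hx]; simp [hi, h i hi]
    funext j
    by_cases hj : (j : ℕ) < k
    · rw [ckFun]
      simp only [hj, h', and_true, true_and, if_pos, if_true]
      rw [hx j]
      simp [hj]
    · rw [ckFun]
      simp only [hj, false_and, if_neg, if_false]
      rw [hx j]
      simp [hj]
  · have hx : ckFun k N x = x := by
      funext j; simp [ckFun, h]
    rw [hx, hx]

/-- The gate `C^k` as a permutation of the states of `N` bit lines. -/
def ckGate (k N : ℕ) : Equiv.Perm (Fin N → Bool) :=
  Function.Involutive.toPerm _ (ckFun_involutive k N)

/-- Swap gate: swaps bits `i` and `j`. -/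
def swapGate {N : ℕ} (i j : Fin N) : Equiv.Perm (Fin N → Bool) :=
  (Equiv.swap i j).arrowCongr (Equiv.refl Bool)

/-- The combined gate. -/
def ggGate (k : ℕ) : Equiv.Perm (Fin (k + 1) → Bool) :=
  (swapGate (⟨k - 1, by omega⟩ : Fin (k + 1)) ⟨k, Nat.lt_succ_self k⟩) * ckGate k (k + 1)

lemma gg_apply (k : ℕ) (x : Fin (k + 1) → Bool) (j : Fin (k + 1)) :
    ggGate k x j =
      ckFun k (k + 1) x (Equiv.swap (⟨k - 1, by omega⟩ : Fin (k + 1)) ⟨k, Nat.lt_succ_self k⟩ j) := rfl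

lemma ck_not_act (k : ℕ) (x : Fin (k + 1) → Bool) (i₀ i₁ : Fin (k + 1))
    (h0 : (i₀ : ℕ) < k) (h1 : (i₁ : ℕ) < k) (hne : x i₀ ≠ x i₁) :
    ckFun k (k + 1) x = x := by
  funext j
  rw [ckFun, if_neg]
  rintro ⟨-, (h | h)⟩
  · exact hne ((h i₀ h0).trans (h i₁ h1).symm)
  · exact hne ((h i₀ h0).trans (h i₁ h1).symm)

/-- canonical almost-constant state -/
def st (k : ℕ) (v b c : Bool) : Fin (k + 1) → Bool :=
  fun j => if (j : ℕ) < k - 1 then v else if (j : ℕ) = k - 1 then b else c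

lemma st_lt {k : ℕ} (v b c : Bool) {j : Fin (k + 1)} (h : (j : ℕ) < k - 1) :
    st k v b c j = v := by simp [st, h]

lemma st_mid {k : ℕ} (v b c : Bool) {j : Fin (k + 1)} (h : (j : ℕ) = k - 1) :
    st k v b c j = b := by simp [st, h]

lemma st_last {k : ℕ} (hk : 1 ≤ k) (v b c : Bool) {j : Fin (k + 1)} (h : (j : ℕ) = k) :
    st k v b c j = c := by
  rw [st, if_neg (by omega), if_neg (by omega)]

lemma swap_fix {k : ℕ} {i : Fin (k + 1)} (hi : (i : ℕ) < k - 1) :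
    Equiv.swap (⟨k - 1, by omega⟩ : Fin (k + 1)) ⟨k, Nat.lt_succ_self k⟩ i = i := by
  apply Equiv.swap_apply_of_ne_of_ne <;> (apply Fin.ne_of_val_ne; simp; omega)

lemma gg_sq (k : ℕ) (hk : 3 ≤ k) (x : Fin (k + 1) → Bool) (i₀ i₁ : Fin (k + 1))
    (h0 : (i₀ : ℕ) < k - 1) (h1 : (i₁ : ℕ) < k - 1) (hne : x i₀ ≠ x i₁) :
    ggGate k (ggGate k x) = x := by
  have hck : ckFun k (k + 1) x = x := ck_not_act k x i₀ i₁ (by omega) (by omega) hne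
  have hgx : ∀ j, ggGate k x j =
      x (Equiv.swap (⟨k - 1, by omega⟩ : Fin (k + 1)) ⟨k, Nat.lt_succ_self k⟩ j) := by
    intro j; rw [gg_apply, hck]
  have hck2 : ckFun k (k + 1) (ggGate k x) = ggGate k x := by
    apply ck_not_act k _ i₀ i₁ (by omega) (by omega)
    rw [hgx, hgx, swap_fix h0, swap_fix h1]; exact hne
  funext j
  rw [gg_apply, hck2, hgx, Equiv.swap_apply_self]

lemma gg_st (k : ℕ) (hk : 3 ≤ k) (v b c : Bool) :
    ggGate k (st k v b c) =
      if b = v then st k (!v) c (!v) else st k v c (!v) := by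
  by_cases hbv : b = v
  · subst hbv
    rw [if_pos rfl]
    have hcond : (∀ i : Fin (k + 1), (i : ℕ) < k → st k b b c i = true) ∨
        (∀ i : Fin (k + 1), (i : ℕ) < k → st k b b c i = false) := by
      cases b
      · right; intro i hi; rw [st]; split_ifs <;> first | rfl | omega
      · left; intro i hi; rw [st]; split_ifs <;> first | rfl | omega
    funext j
    rw [gg_apply]
    rcases lt_trichotomy ((j : ℕ)) (k - 1) with hj | hj | hj
    · rw [swap_fix hj, ckFun, if_pos ⟨by omega, hcond⟩, st_lt _ _ _ hj, st_lt _ _ _ hj]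
    · have hjp : j = ⟨k - 1, by omega⟩ := Fin.ext hj
      rw [hjp, Equiv.swap_apply_left, ckFun,
        if_neg (fun h => absurd h.1 (by simp)),
        st_last (by omega) _ _ _ (by simp),
        st_mid _ _ _ (by simp)]
    · have hj' : (j : ℕ) = k := by omega
      have hjq : j = ⟨k, Nat.lt_succ_self k⟩ := Fin.ext hj'
      rw [hjq, Equiv.swap_apply_right, ckFun,
        if_pos ⟨by simp; omega, hcond⟩,
        st_mid _ _ _ (by simp),
        st_last (by omega) _ _ _ (by simp)]
  · rw [if_neg hbv]
    have hck : ckFun k (k + 1) (st k v b c) = st k v b c := by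
      apply ck_not_act k _ (⟨0, by omega⟩ : Fin (k + 1)) ⟨k - 1, by omega⟩
          (by simp; omega) (by simp; omega)
      rw [st_lt _ _ _ (by simp; omega), st_mid _ _ _ (by simp)]
      exact fun h => hbv h.symm
    funext j
    rw [gg_apply, hck]
    rcases lt_trichotomy ((j : ℕ)) (k - 1) with hj | hj | hj
    · rw [swap_fix hj, st_lt _ _ _ hj, st_lt _ _ _ hj]
    · have hjp : j = ⟨k - 1, by omega⟩ := Fin.ext hj
      rw [hjp, Equiv.swap_apply_left,
        st_last (by omega) _ _ _ (by simp),
        st_mid _ _ _ (by simp)]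
    · have hj' : (j : ℕ) = k := by omega
      have hjq : j = ⟨k, Nat.lt_succ_self k⟩ := Fin.ext hj'
      rw [hjq, Equiv.swap_apply_right,
        st_mid _ _ _ (by simp),
        st_last (by omega) _ _ _ (by simp)]
      cases v <;> simp_all

/-- Let `k ≥ 3`. As permutations of the states of `k+1` bit lines
(bits numbered from 1 informally, from 0 here), the order of the product
`s_{k,k+1} ∘ C^k` is 6. -/
theorem orderOf_swap_mul_ck (k : ℕ) (hk : 3 ≤ k) :
    orderOf ((swapGate (⟨k - 1, by omega⟩ : Fin (k + 1)) ⟨k, by omega⟩) * ckGate k (k + 1))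
      = 6 := by
  show orderOf (ggGate k) = 6
  have h6 : ggGate k ^ 6 = 1 := by
    ext x
    simp only [pow_succ, pow_zero, one_mul, Equiv.Perm.mul_apply, Equiv.Perm.coe_one, id_eq]
    by_cases hcon : ∀ i : Fin (k + 1), (i : ℕ) < k - 1 → x i = x ⟨0, by omega⟩
    · have hx : ∃ v b c, x = st k v b c := by
        refine ⟨x ⟨0, by omega⟩, x ⟨k - 1, by omega⟩, x ⟨k, by omega⟩, funext fun j => ?_⟩
        rcases lt_trichotomy ((j : ℕ)) (k - 1) with hj | hj | hj
        · rw [st_lt _ _ _ hj]; exact hcon j hj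
        · rw [st_mid _ _ _ hj]; congr 1; exact Fin.ext hj
        · rw [st_last (by omega) _ _ _ (by omega)]
          congr 1
          exact Fin.ext (show (j : ℕ) = k by omega)
      obtain ⟨v, b, c, rfl⟩ := hx
      cases v <;> cases b <;> cases c <;> simp [gg_st k hk]
    · push_neg at hcon
      obtain ⟨i, hi, hne⟩ := hcon
      have key : ∀ y : Fin (k + 1) → Bool, y i ≠ y ⟨0, by omega⟩ →
          ggGate k (ggGate k y) = y := fun y h =>
        gg_sq k hk y i ⟨0, by omega⟩ hi (by simp; omega) h
      rw [key x hne, key x hne, key x hne]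
  have hd : orderOf (ggGate k) ∣ 6 := orderOf_dvd_of_pow_eq_one h6
  have h2 : ggGate k ^ 2 ≠ 1 := by
    intro h
    have h' : ggGate k (ggGate k (st k true true true)) = st k true true true := by
      have := Equiv.ext_iff.mp h (st k true true true)
      simpa [pow_succ, Equiv.Perm.mul_apply] using this
    have hcomp : ggGate k (ggGate k (st k true true true)) = st k false false true := by
      simp [gg_st k hk]
    rw [hcomp] at h'
    have h0 := congrFun h' ⟨0, by omega⟩
    rw [st_lt _ _ _ (by simp; omega), st_lt _ _ _ (by simp; omega)] at h0
    exact absurd h0 (by simp)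
  have h3 : ggGate k ^ 3 ≠ 1 := by
    intro h
    set x : Fin (k + 1) → Bool := fun j => decide ((j : ℕ) = 0 ∨ (j : ℕ) = k) with hxdef
    have hx0 : x ⟨0, by omega⟩ = true := by simp [hxdef]
    have hx1 : x ⟨1, by omega⟩ = false := by simp [hxdef]; omega
    have hne : x ⟨0, by omega⟩ ≠ x ⟨1, by omega⟩ := by rw [hx0, hx1]; simp
    have hsq : ggGate k (ggGate k x) = x :=
      gg_sq k hk x ⟨0, by omega⟩ ⟨1, by omega⟩ (by simp; omega) (by simp; omega) hne
    have hck : ckFun k (k + 1) x = x :=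
      ck_not_act k x ⟨0, by omega⟩ ⟨1, by omega⟩ (by simp; omega) (by simp; omega) hne
    have h' : ggGate k x = x := by
      have h3' : ggGate k (ggGate k (ggGate k x)) = x := by
        have := Equiv.ext_iff.mp h x
        simpa [pow_succ, Equiv.Perm.mul_apply] using this
      rwa [hsq] at h3'
    have hval := congrFun h' ⟨k - 1, by omega⟩
    rw [gg_apply, Equiv.swap_apply_left, hck] at hval
    simp only [hxdef] at hval
    simp at hval
    omega
  have h2' : ¬ (orderOf (ggGate k) ∣ 2) := fun hdd => h2 (orderOf_dvd_iff_pow_eq_one.mp hdd)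
  have h3' : ¬ (orderOf (ggGate k) ∣ 3) := fun hdd => h3 (orderOf_dvd_iff_pow_eq_one.mp hdd)
  have hle : orderOf (ggGate k) ≤ 6 := Nat.le_of_dvd (by norm_num) hd
  have hpos : 0 < orderOf (ggGate k) := Nat.pos_of_dvd_of_pos hd (by norm_num)
  interval_cases h : orderOf (ggGate k) <;>
    first
      | rfl
      | (exfalso; revert hd h2' h3'; decide)
end

section
/- Let L be a 3-CNF formula with m ≥ 1 clauses over boolean variables x_1, …, x_n (each clause a disjunction of 3 literals). Then there is a list of at most 29·m gates, each of which is a NOT, CNOT, Toffoli, or transposition (swap) of bit lines acting on N = n + 1 + 6m bit lines, whose composite permutation maps, for every assignment x ∈ Bool^n and every a ∈ Bool, the state (x, a, false, …, false) (ancilla bits initialized to false) to the state (x, a XOR L(x), false, …, false), where L(x) ∈ Bool is the truth value of L under the assignment x. -/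
/-- Flip bit `t` of the state `x` precisely when `c x` holds. -/
def condFlipFun {N : ℕ} (c : (Fin N → Bool) → Bool) (t : Fin N)
    (x : Fin N → Bool) : Fin N → Bool :=
  if c x then Function.update x t (!(x t)) else x

lemma condFlipFun_involutive {N : ℕ} (c : (Fin N → Bool) → Bool) (t : Fin N)
    (hc : ∀ x b, c (Function.update x t b) = c x) :
    Function.Involutive (condFlipFun c t) := by
  intro x
  unfold condFlipFun
  by_cases h : c x = true
  · rw [if_pos h, if_pos (by rw [hc]; exact h)]
    simp [Function.update_idem, Function.update_self, Function.update_eq_self]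
  · rw [if_neg h, if_neg h]

/-- NOT gate on bit `i`. -/
def notGate {N : ℕ} (i : Fin N) : Equiv.Perm (Fin N → Bool) :=
  Function.Involutive.toPerm _ (condFlipFun_involutive (fun _ => true) i (fun _ _ => rfl))

/-- CNOT gate: flips bit `j` iff bit `i` is true. -/
def cnotGate {N : ℕ} (i j : Fin N) (h : i ≠ j) : Equiv.Perm (Fin N → Bool) :=
  Function.Involutive.toPerm _ (condFlipFun_involutive (fun x => x i) j
    (fun x b => Function.update_of_ne h b x))

/-- Toffoli gate: flips bit `k` iff bits `i` and `j` are both true. -/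
def tofGate {N : ℕ} (i j k : Fin N) (hik : i ≠ k) (hjk : j ≠ k) :
    Equiv.Perm (Fin N → Bool) :=
  Function.Involutive.toPerm _ (condFlipFun_involutive (fun x => x i && x j) k
    (fun x b => by rw [Function.update_of_ne hik, Function.update_of_ne hjk]))

/-- A gate is basic if it is a NOT, a CNOT, a Toffoli, or a swap of bit lines. -/
def IsBasicGate {N : ℕ} (g : Equiv.Perm (Fin N → Bool)) : Prop :=
  (∃ i, g = notGate i) ∨
  (∃ i j, ∃ h : i ≠ j, g = cnotGate i j h) ∨
  (∃ i j k, ∃ hik : i ≠ k, ∃ hjk : j ≠ k, g = tofGate i j k hik hjk) ∨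
  (∃ i j, g = swapGate i j)

/-- The value of a literal (a variable together with a polarity) under an assignment. -/
def evalLit {n : ℕ} (x : Fin n → Bool) (l : Fin n × Bool) : Bool :=
  if l.2 then x l.1 else !(x l.1)

/-- The value of a clause (a disjunction of three literals) under an assignment. -/
def evalClause {n : ℕ} (x : Fin n → Bool) (C : Fin 3 → Fin n × Bool) : Bool :=
  evalLit x (C 0) || evalLit x (C 1) || evalLit x (C 2)

/-- The truth value of a 3-CNF formula (a conjunction of `m` clauses) under an assignment. -/
def evalCNF {n m : ℕ} (L : Fin m → Fin 3 → Fin n × Bool) (x : Fin n → Bool) : Bool :=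
  decide (∀ j : Fin m, evalClause x (L j) = true)

/-- The state of `n + 1 + 6m` bit lines consisting of the assignment `x`, the target
bit `a`, and `6m` ancilla bits initialized to `false`. -/
def initState (n m : ℕ) (x : Fin n → Bool) (a : Bool) : Fin (n + 1 + 6 * m) → Bool :=
  fun i => if h : (i : ℕ) < n then x ⟨i, h⟩ else if (i : ℕ) = n then a else false

-- mini gate language
inductive G (N : ℕ) where
  | not (i : Fin N)
  | cnot (i j : Fin N) (h : i ≠ j)
  | tof (i j k : Fin N) (hik : i ≠ k) (hjk : j ≠ k)

def G.toPerm {N : ℕ} : G N → Equiv.Perm (Fin N → Bool)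
  | .not i => notGate i
  | .cnot i j h => cnotGate i j h
  | .tof i j k hik hjk => tofGate i j k hik hjk

def G.apply {N : ℕ} (g : G N) (s : Fin N → Bool) : Fin N → Bool :=
  match g with
  | .not i => Function.update s i (!(s i))
  | .cnot i j _ => Function.update s j (xor (s i) (s j))
  | .tof i j k _ _ => Function.update s k (xor (s i && s j) (s k))

lemma G.toPerm_apply {N : ℕ} (g : G N) (s : Fin N → Bool) :
    g.toPerm s = g.apply s := by
  cases g with
  | not i =>
      simp [toPerm, notGate, Function.Involutive.coe_toPerm, condFlipFun, G.apply]
  | cnot i j hij =>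
      simp only [toPerm, cnotGate, Function.Involutive.coe_toPerm, condFlipFun, G.apply]
      rcases Bool.eq_false_or_eq_true (s i) with h | h <;>
        simp [h, Function.update_eq_self]
  | tof i j k hik hjk =>
      simp only [toPerm, tofGate, Function.Involutive.coe_toPerm, condFlipFun, G.apply]
      rcases Bool.eq_false_or_eq_true (s i && s j) with h | h <;>
        simp [h, Function.update_eq_self]

lemma G.apply_involutive {N : ℕ} (g : G N) : Function.Involutive g.apply := by
  intro s
  rw [← G.toPerm_apply, ← G.toPerm_apply]
  cases g with
  | not i =>
      simp only [toPerm, notGate, Function.Involutive.coe_toPerm]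
      exact condFlipFun_involutive (fun _ => true) i (fun _ _ => rfl) s
  | cnot i j hij =>
      simp only [toPerm, cnotGate, Function.Involutive.coe_toPerm]
      exact condFlipFun_involutive _ _ (fun x b => Function.update_of_ne hij b x) s
  | tof i j k hik hjk =>
      simp only [toPerm, tofGate, Function.Involutive.coe_toPerm]
      exact condFlipFun_involutive _ _ (fun x b => by
        rw [Function.update_of_ne hik, Function.update_of_ne hjk]) s

lemma foldl_reverse_undo {N : ℕ} (l : List (G N)) (s : Fin N → Bool) :
    l.reverse.foldl (fun s g => g.apply s) (l.foldl (fun s g => g.apply s) s) = s := by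
  induction l generalizing s with
  | nil => rfl
  | cons g t ih =>
      have h0 : List.foldl (fun s g => G.apply g s) s (g :: t)
          = List.foldl (fun s g => G.apply g s) (g.apply s) t := rfl
      rw [List.reverse_cons, h0, List.foldl_append, ih (g.apply s)]
      simp only [List.foldl_cons, List.foldl_nil]
      exact g.apply_involutive s

section Circuit
variable {n m : ℕ}

def vIdx (n m : ℕ) (i : Fin n) : Fin (n + 1 + 6 * m) := ⟨i, by omega⟩

def tIdx (n m : ℕ) : Fin (n + 1 + 6 * m) := ⟨n, by omega⟩

def aIdx (n : ℕ) {m : ℕ} (j : Fin m) (k : Fin 6) : Fin (n + 1 + 6 * m) :=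
  ⟨n + 1 + 6 * (j : ℕ) + (k : ℕ), by
    have := j.isLt; have := k.isLt; omega⟩

lemma vIdx_ne_aIdx (i : Fin n) (j : Fin m) (k : Fin 6) :
    vIdx n m i ≠ aIdx n j k := by
  have := i.isLt
  simp only [vIdx, aIdx, ne_eq, Fin.mk.injEq]
  omega

lemma tIdx_ne_aIdx (j : Fin m) (k : Fin 6) : tIdx n m ≠ aIdx n j k := by
  simp only [tIdx, aIdx, ne_eq, Fin.mk.injEq]; omega

lemma aIdx_ne (j j' : Fin m) (k k' : Fin 6) (h : ¬ (j = j' ∧ k = k')) :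
    aIdx n j k ≠ aIdx n j' k' := by
  have := k.isLt; have := k'.isLt
  simp only [Fin.ext_iff, not_and_or] at h
  simp only [aIdx, ne_eq, Fin.mk.injEq]
  omega

def mkState (n m : ℕ) (x : Fin n → Bool) (a : Bool) (f : Fin m → Fin 6 → Bool) :
    Fin (n + 1 + 6 * m) → Bool := fun i =>
  if h : (i : ℕ) < n then x ⟨i, h⟩
  else if h' : (i : ℕ) = n then a
  else f ⟨((i : ℕ) - (n + 1)) / 6, by have := i.isLt; omega⟩
         ⟨((i : ℕ) - (n + 1)) % 6, by omega⟩

lemma mkState_vIdx (x : Fin n → Bool) (a : Bool) (f : Fin m → Fin 6 → Bool) (i : Fin n) :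
    mkState n m x a f (vIdx n m i) = x i := by
  simp [mkState, vIdx, i.isLt]

lemma mkState_tIdx (x : Fin n → Bool) (a : Bool) (f : Fin m → Fin 6 → Bool) :
    mkState n m x a f (tIdx n m) = a := by
  simp [mkState, tIdx]

lemma mkState_aIdx (x : Fin n → Bool) (a : Bool) (f : Fin m → Fin 6 → Bool)
    (j : Fin m) (k : Fin 6) :
    mkState n m x a f (aIdx n j k) = f j k := by
  have hk := k.isLt
  have h1 : ¬ ((aIdx n j k : ℕ) < n) := by simp [aIdx]; omega
  have h2 : ¬ ((aIdx n j k : ℕ) = n) := by simp [aIdx]; omega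
  simp only [mkState, dif_neg h1, dif_neg h2]
  congr 1 <;> · apply Fin.ext; simp only [aIdx]; omega

/-- update an ancilla entry -/
def updF (f : Fin m → Fin 6 → Bool) (j : Fin m) (k : Fin 6) (b : Bool) :
    Fin m → Fin 6 → Bool :=
  fun j' k' => if j' = j ∧ k' = k then b else f j' k'

lemma update_mkState_tIdx (x : Fin n → Bool) (a b : Bool) (f : Fin m → Fin 6 → Bool) :
    Function.update (mkState n m x a f) (tIdx n m) b = mkState n m x b f := by
  funext i
  rcases eq_or_ne i (tIdx n m) with rfl | h
  · rw [Function.update_self, mkState_tIdx]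
  · rw [Function.update_of_ne h]
    have hv : (i : ℕ) ≠ n := fun hc => h (Fin.ext hc)
    simp [mkState, hv]

lemma update_mkState_aIdx (x : Fin n → Bool) (a b : Bool) (f : Fin m → Fin 6 → Bool)
    (j : Fin m) (k : Fin 6) :
    Function.update (mkState n m x a f) (aIdx n j k) b = mkState n m x a (updF f j k b) := by
  funext i
  rcases eq_or_ne i (aIdx n j k) with rfl | h
  · rw [Function.update_self, mkState_aIdx, updF]
    simp
  · rw [Function.update_of_ne h]
    simp only [mkState]
    split
    · rfl
    · split
      · rfl
      · rename_i h1 h2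
        rw [updF]
        rw [if_neg]
        rintro ⟨hj, hk⟩
        apply h
        apply Fin.ext
        have hj' : ((i : ℕ) - (n + 1)) / 6 = (j : ℕ) := by
          rw [← hj]
        have hk' : ((i : ℕ) - (n + 1)) % 6 = (k : ℕ) := by
          rw [← hk]
        have := i.isLt
        simp only [aIdx]
        omega

lemma apply_not_aIdx (x : Fin n → Bool) (a : Bool) (f : Fin m → Fin 6 → Bool)
    (j : Fin m) (k : Fin 6) :
    (G.not (aIdx n j k)).apply (mkState n m x a f)
      = mkState n m x a (updF f j k (!(f j k))) := by
  rw [G.apply, mkState_aIdx, update_mkState_aIdx]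

lemma apply_cnot_v_a (x : Fin n → Bool) (a : Bool) (f : Fin m → Fin 6 → Bool)
    (v : Fin n) (j : Fin m) (k : Fin 6) (h : vIdx n m v ≠ aIdx n j k) :
    (G.cnot (vIdx n m v) (aIdx n j k) h).apply (mkState n m x a f)
      = mkState n m x a (updF f j k (xor (x v) (f j k))) := by
  rw [G.apply, mkState_aIdx, mkState_vIdx, update_mkState_aIdx]

lemma apply_tof_a (x : Fin n → Bool) (a : Bool) (f : Fin m → Fin 6 → Bool)
    (j1 j2 j3 : Fin m) (k1 k2 k3 : Fin 6) (h1 : aIdx n j1 k1 ≠ aIdx n j3 k3)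
    (h2 : aIdx n j2 k2 ≠ aIdx n j3 k3) :
    (G.tof (aIdx n j1 k1) (aIdx n j2 k2) (aIdx n j3 k3) h1 h2).apply (mkState n m x a f)
      = mkState n m x a (updF f j3 k3 (xor (f j1 k1 && f j2 k2) (f j3 k3))) := by
  rw [G.apply, mkState_aIdx, mkState_aIdx, mkState_aIdx, update_mkState_aIdx]

lemma apply_cnot_a_t (x : Fin n → Bool) (a : Bool) (f : Fin m → Fin 6 → Bool)
    (j : Fin m) (k : Fin 6) (h : aIdx n j k ≠ tIdx n m) :
    (G.cnot (aIdx n j k) (tIdx n m) h).apply (mkState n m x a f)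
      = mkState n m x (xor (f j k) a) f := by
  rw [G.apply, mkState_aIdx, mkState_tIdx, update_mkState_tIdx]

lemma apply_cnot_a_a (x : Fin n → Bool) (a : Bool) (f : Fin m → Fin 6 → Bool)
    (j1 j2 : Fin m) (k1 k2 : Fin 6) (h : aIdx n j1 k1 ≠ aIdx n j2 k2) :
    (G.cnot (aIdx n j1 k1) (aIdx n j2 k2) h).apply (mkState n m x a f)
      = mkState n m x a (updF f j2 k2 (xor (f j1 k1) (f j2 k2))) := by
  rw [G.apply, mkState_aIdx, mkState_aIdx, update_mkState_aIdx]

lemma updF_apply (f : Fin m → Fin 6 → Bool) (j j' : Fin m) (k k' : Fin 6) (b : Bool) :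
    updF f j k b j' k' = if j' = j ∧ k' = k then b else f j' k' := rfl

def evalsA {N : ℕ} : List (G N) → (Fin N → Bool) → (Fin N → Bool) :=
  fun l s => l.foldl (fun s g => g.apply s) s

lemma evalsA_append {N : ℕ} (l1 l2 : List (G N)) (s : Fin N → Bool) :
    evalsA (l1 ++ l2) s = evalsA l2 (evalsA l1 s) := List.foldl_append ..

lemma evalsA_reverse_undo {N : ℕ} (l : List (G N)) (s : Fin N → Bool) :
    evalsA l.reverse (evalsA l s) = s := foldl_reverse_undo l s

variable (L : Fin m → Fin 3 → Fin n × Bool)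

def k6 (k : Fin 3) : Fin 6 := ⟨k, by omega⟩

lemma k6_0 : k6 0 = ⟨0, by omega⟩ := rfl
lemma k6_1 : k6 1 = ⟨1, by omega⟩ := rfl
lemma k6_2 : k6 2 = ⟨2, by omega⟩ := rfl

def litCircuit (j : Fin m) (k : Fin 3) : List (G (n + 1 + 6 * m)) :=
  G.cnot (vIdx n m (L j k).1) (aIdx n j (k6 k)) (vIdx_ne_aIdx _ _ _) ::
  (if (L j k).2 then [G.not (aIdx n j (k6 k))] else [])

def nl (x : Fin n → Bool) (j : Fin m) (k : Fin 3) : Bool := !(evalLit x (L j k))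

def clauseRow (x : Fin n → Bool) (j : Fin m) : Fin 6 → Bool := fun k =>
  if (k : ℕ) = 0 then nl L x j 0
  else if (k : ℕ) = 1 then nl L x j 1
  else if (k : ℕ) = 2 then nl L x j 2
  else if (k : ℕ) = 3 then nl L x j 0 && nl L x j 1
  else if (k : ℕ) = 4 then !((nl L x j 0 && nl L x j 1) && nl L x j 2)
  else false

lemma clauseRow_four (x : Fin n → Bool) (j : Fin m) :
    clauseRow L x j ⟨4, by omega⟩ = evalClause x (L j) := by
  show (if (4 : ℕ) = 0 then _ else _) = _
  norm_num [evalClause, nl]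

lemma lit_sem (x : Fin n → Bool) (a : Bool) (f : Fin m → Fin 6 → Bool) (j : Fin m)
    (k : Fin 3) (hf : f j (k6 k) = false) :
    evalsA (litCircuit L j k) (mkState n m x a f)
      = mkState n m x a (updF f j (k6 k) (!(evalLit x (L j k)))) := by
  rcases Bool.eq_false_or_eq_true ((L j k).2) with h | h
  · have he : evalLit x (L j k) = x (L j k).1 := by simp [evalLit, h]
    simp only [litCircuit, h, if_true, ite_true, evalsA, List.foldl_cons, List.foldl_nil]
    rw [apply_cnot_v_a, hf, Bool.xor_false, apply_not_aIdx, he,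
      show updF f j (k6 k) (x (L j k).1) j (k6 k) = x (L j k).1 from by simp [updF_apply]]
    refine congrArg _ ?_
    funext j' k'
    simp only [updF_apply]
    split <;> rfl
  · have he : evalLit x (L j k) = !(x (L j k).1) := by simp [evalLit, h]
    simp only [litCircuit, h, Bool.false_eq_true, if_false, ite_false, evalsA,
      List.foldl_cons, List.foldl_nil]
    rw [apply_cnot_v_a, hf, Bool.xor_false, he, Bool.not_not]

def clauseCircuit (j : Fin m) : List (G (n + 1 + 6 * m)) :=
  litCircuit L j 0 ++ litCircuit L j 1 ++ litCircuit L j 2 ++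
  [G.tof (aIdx n j ⟨0, by omega⟩) (aIdx n j ⟨1, by omega⟩) (aIdx n j ⟨3, by omega⟩)
      (aIdx_ne _ _ _ _ (by simp)) (aIdx_ne _ _ _ _ (by simp)),
   G.tof (aIdx n j ⟨3, by omega⟩) (aIdx n j ⟨2, by omega⟩) (aIdx n j ⟨4, by omega⟩)
      (aIdx_ne _ _ _ _ (by simp)) (aIdx_ne _ _ _ _ (by simp)),
   G.not (aIdx n j ⟨4, by omega⟩)]

lemma clauseCircuit_length (j : Fin m) : (clauseCircuit L j).length ≤ 9 := by
  rw [clauseCircuit]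
  simp only [List.length_append, litCircuit]
  rcases (L j 0).2 <;> rcases (L j 1).2 <;> rcases (L j 2).2 <;> simp

lemma clause_sem (x : Fin n → Bool) (a : Bool) (f : Fin m → Fin 6 → Bool) (j : Fin m)
    (hf : ∀ k, f j k = false) :
    evalsA (clauseCircuit L j) (mkState n m x a f)
      = mkState n m x a (Function.update f j (clauseRow L x j)) := by
  rw [clauseCircuit, evalsA_append, evalsA_append, evalsA_append]
  rw [lit_sem L x a f j 0 (hf _)]
  rw [lit_sem L x a _ j 1 (by rw [updF_apply, if_neg (by simp [k6_0, k6_1])]; exact hf _)]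
  rw [lit_sem L x a _ j 2 (by
        rw [updF_apply, if_neg (by simp [k6_1, k6_2]), updF_apply,
          if_neg (by simp [k6_0, k6_2])]
        exact hf _)]
  show evalsA _ _ = _
  simp only [evalsA, List.foldl_cons, List.foldl_nil]
  rw [apply_tof_a, apply_tof_a, apply_not_aIdx]
  refine congrArg _ ?_
  funext j' k'
  rcases eq_or_ne j' j with rfl | hj
  · rw [Function.update_self]
    fin_cases k' <;>
      simp [updF_apply, clauseRow, nl, hf, k6_0, k6_1, k6_2]
  · rw [Function.update_of_ne hj]
    simp [updF_apply, hj]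

def phase1 : (t : ℕ) → t ≤ m → List (G (n + 1 + 6 * m))
  | 0, _ => []
  | t + 1, h => phase1 t (by omega) ++ clauseCircuit L ⟨t, by omega⟩

lemma phase1_length : ∀ (t : ℕ) (ht : t ≤ m), (phase1 L t ht).length ≤ 9 * t
  | 0, _ => by simp [phase1]
  | t + 1, h => by
      rw [phase1, List.length_append]
      have h1 := phase1_length t (by omega)
      have h2 := clauseCircuit_length L (⟨t, by omega⟩ : Fin m)
      omega

def fA (x : Fin n → Bool) (t : ℕ) : Fin m → Fin 6 → Bool :=
  fun j k => if (j : ℕ) < t then clauseRow L x j k else false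

lemma phase1_sem (x : Fin n → Bool) (a : Bool) :
    ∀ (t : ℕ) (ht : t ≤ m),
      evalsA (phase1 L t ht) (mkState n m x a (fun _ _ => false))
        = mkState n m x a (fA L x t)
  | 0, _ => by
      simp only [phase1, evalsA, List.foldl_nil]
      refine congrArg _ ?_
      funext j k
      simp [fA]
  | t + 1, h => by
      rw [phase1, evalsA_append, phase1_sem x a t (by omega),
        clause_sem L x a _ ⟨t, by omega⟩ (by intro k; simp [fA])]
      refine congrArg _ ?_
      funext j k
      rcases eq_or_ne j (⟨t, by omega⟩ : Fin m) with rfl | hj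
      · rw [Function.update_self]
        simp [fA]
      · rw [Function.update_of_ne hj]
        have : (j : ℕ) ≠ t := fun hc => hj (Fin.ext hc)
        simp only [fA]
        rcases Nat.lt_or_ge (j : ℕ) t with h' | h'
        · rw [if_pos h', if_pos (by omega)]
        · rw [if_neg (by omega), if_neg (by omega)]

def dval (x : Fin n → Bool) (t : ℕ) : Bool :=
  decide (∀ j : Fin m, (j : ℕ) ≤ t → evalClause x (L j) = true)

def fB (x : Fin n → Bool) (u : ℕ) : Fin m → Fin 6 → Bool :=
  fun j k => if (j : ℕ) < u ∧ (k : ℕ) = 5 then dval L x (j : ℕ) else clauseRow L x j k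

def dGate (t : ℕ) (ht : t < m) : G (n + 1 + 6 * m) :=
  if h0 : t = 0 then
    G.cnot (aIdx n ⟨t, ht⟩ ⟨4, by omega⟩) (aIdx n ⟨t, ht⟩ ⟨5, by omega⟩)
      (aIdx_ne _ _ _ _ (by simp))
  else
    G.tof (aIdx n ⟨t - 1, by omega⟩ ⟨5, by omega⟩) (aIdx n ⟨t, ht⟩ ⟨4, by omega⟩)
      (aIdx n ⟨t, ht⟩ ⟨5, by omega⟩)
      (aIdx_ne _ _ _ _ (by simp [Fin.ext_iff]; omega))
      (aIdx_ne _ _ _ _ (by simp))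

def phase2 : (u : ℕ) → u ≤ m → List (G (n + 1 + 6 * m))
  | 0, _ => []
  | u + 1, h => phase2 u (by omega) ++ [dGate u h]

lemma phase2_length : ∀ (u : ℕ) (hu : u ≤ m), (phase2 (n := n) u hu).length = u
  | 0, _ => rfl
  | u + 1, h => by
      rw [phase2, List.length_append, phase2_length u (by omega)]
      rfl

lemma dval_zero (x : Fin n → Bool) (hm : 0 < m) :
    dval L x 0 = evalClause x (L ⟨0, hm⟩) := by
  have hv : ((⟨0, hm⟩ : Fin m) : ℕ) = 0 := rfl
  rw [dval]
  rcases Bool.eq_false_or_eq_true (evalClause x (L ⟨0, hm⟩)) with h | h <;> rw [h]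
  · rw [decide_eq_true_eq]
    intro j hj
    have hj0 : j = ⟨0, hm⟩ := Fin.ext (by omega)
    rw [hj0, h]
  · rw [decide_eq_false_iff_not]
    intro hP
    rw [hP ⟨0, hm⟩ (by omega)] at h
    exact absurd h (by simp)

lemma dval_succ (x : Fin n → Bool) (t : ℕ) (h0 : t ≠ 0) (ht : t < m) :
    dval L x t = (dval L x (t - 1) && evalClause x (L ⟨t, ht⟩)) := by
  have hv : ((⟨t, ht⟩ : Fin m) : ℕ) = t := rfl
  rw [dval, dval]
  rcases Bool.eq_false_or_eq_true (evalClause x (L ⟨t, ht⟩)) with h | h <;> rw [h]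
  · rw [Bool.and_true]
    rw [decide_eq_decide]
    constructor
    · intro hP j hj
      exact hP j (by omega)
    · intro hP j hj
      rcases Nat.lt_or_ge (j : ℕ) t with h' | h'
      · exact hP j (by omega)
      · have hjt : j = ⟨t, ht⟩ := Fin.ext (by omega)
        rw [hjt, h]
  · rw [Bool.and_false, decide_eq_false_iff_not]
    intro hP
    rw [hP ⟨t, ht⟩ (by omega)] at h
    exact absurd h (by simp)

lemma dval_last (x : Fin n → Bool) (hm : 0 < m) :
    dval L x (m - 1) = evalCNF L x := by
  rw [dval, evalCNF, decide_eq_decide]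
  constructor
  · intro hP j
    exact hP j (by have := j.isLt; omega)
  · intro hP j _
    exact hP j

lemma fB_read_five (x : Fin n → Bool) (u : ℕ) (j : Fin m) (hj : (j : ℕ) < u) :
    fB L x u j ⟨5, by omega⟩ = dval L x (j : ℕ) := by
  rw [fB, if_pos ⟨hj, rfl⟩]

lemma fB_read_no (x : Fin n → Bool) (u : ℕ) (j : Fin m) (k : Fin 6)
    (h : ¬ ((j : ℕ) < u ∧ (k : ℕ) = 5)) :
    fB L x u j k = clauseRow L x j k := by
  rw [fB, if_neg h]

lemma phase2_sem (x : Fin n → Bool) (a : Bool) :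
    ∀ (u : ℕ) (hu : u ≤ m),
      evalsA (phase2 u hu) (mkState n m x a (fB L x 0))
        = mkState n m x a (fB L x u)
  | 0, _ => rfl
  | u + 1, h => by
      rw [phase2, evalsA_append, phase2_sem x a u (by omega)]
      have step : (dGate u h).apply (mkState n m x a (fB L x u))
          = mkState n m x a (updF (fB L x u) ⟨u, h⟩ ⟨5, by omega⟩ (dval L x u)) := by
        rcases Nat.eq_zero_or_pos u with rfl | hu0
        · rw [dGate, dif_pos rfl, apply_cnot_a_a,
            fB_read_no L x 0 _ _ (by simp),
            fB_read_no L x 0 _ _ (by simp),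
            show clauseRow L x ⟨0, h⟩ ⟨5, by omega⟩ = false from rfl,
            Bool.xor_false, clauseRow_four, ← dval_zero L x (by omega)]
        · rw [dGate, dif_neg (by omega), apply_tof_a,
            fB_read_five L x u ⟨u - 1, by omega⟩ (by show u - 1 < u; omega),
            fB_read_no L x u _ _ (by simp),
            fB_read_no L x u _ _ (by simp),
            show clauseRow L x ⟨u, h⟩ ⟨5, by omega⟩ = false from rfl,
            Bool.xor_false, clauseRow_four]
          refine congrArg _ (congrArg _ ?_)
          rw [dval_succ L x u (by omega) (by omega)]
      simp only [evalsA, List.foldl_cons, List.foldl_nil]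
      rw [step]
      refine congrArg _ ?_
      funext j k
      rw [updF_apply]
      split
      · rename_i hc
        rcases hc with ⟨rfl, rfl⟩
        rw [fB_read_five L x (u + 1) ⟨u, h⟩ (by show u < u + 1; omega)]
      · rename_i hc
        rw [fB, fB]
        have hiff : ((j : ℕ) < u + 1 ∧ (k : ℕ) = 5) = ((j : ℕ) < u ∧ (k : ℕ) = 5) := by
          apply propext
          constructor <;> rintro ⟨h1, h2⟩ <;> refine ⟨?_, h2⟩
          · have hju : (j : ℕ) ≠ u := fun hh => hc ⟨Fin.ext hh, Fin.ext h2⟩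
            omega
          · omega
        exact if_congr (iff_of_eq hiff).symm rfl rfl

end Circuit

/-- For every 3-CNF formula `L` with `m ≥ 1` clauses over `n` boolean
variables there is a list of at most `29·m` basic gates (NOT, CNOT, Toffoli, swap) on
`N = n + 1 + 6m` bit lines whose composite (applied left to right) maps, for every
assignment `x` and every `a : Bool`, the state `(x, a, false, …, false)` to the state
`(x, a XOR L(x), false, …, false)`. -/
theorem exists_oracle_circuit (n m : ℕ) (hm : 1 ≤ m) (L : Fin m → Fin 3 → Fin n × Bool) :
    ∃ gates : List (Equiv.Perm (Fin (n + 1 + 6 * m) → Bool)),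
      gates.length ≤ 29 * m ∧
      (∀ g ∈ gates, IsBasicGate g) ∧
      ∀ (x : Fin n → Bool) (a : Bool),
        gates.foldl (fun s g => g s) (initState n m x a)
          = initState n m x (xor a (evalCNF L x)) := by
  have hm0 : 0 < m := hm
  set P : List (G (n + 1 + 6 * m)) := phase1 L m le_rfl with hPdef
  set A : List (G (n + 1 + 6 * m)) := phase2 m le_rfl with hAdef
  set mid : G (n + 1 + 6 * m) :=
    G.cnot (aIdx n ⟨m - 1, by omega⟩ ⟨5, by omega⟩) (tIdx n m)
      ((tIdx_ne_aIdx _ _).symm) with hmiddef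
  refine ⟨(P ++ A ++ ([mid] ++ (A.reverse ++ P.reverse))).map G.toPerm, ?_, ?_, ?_⟩
  · have hP : P.length ≤ 9 * m := phase1_length L m le_rfl
    have hA : A.length = m := phase2_length m le_rfl
    simp only [List.length_map, List.length_append, List.length_reverse, List.length_cons,
      List.length_nil]
    omega
  · intro g hg
    rw [List.mem_map] at hg
    obtain ⟨g0, _, rfl⟩ := hg
    cases g0 with
    | not i => exact Or.inl ⟨i, rfl⟩
    | cnot i j h => exact Or.inr (Or.inl ⟨i, j, h, rfl⟩)
    | tof i j k hik hjk => exact Or.inr (Or.inr (Or.inl ⟨i, j, k, hik, hjk, rfl⟩))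
  · intro x a
    have hfold :
        ((P ++ A ++ ([mid] ++ (A.reverse ++ P.reverse))).map G.toPerm).foldl
            (fun s g => g s) (initState n m x a)
          = evalsA (P ++ A ++ ([mid] ++ (A.reverse ++ P.reverse))) (initState n m x a) := by
      rw [List.foldl_map]
      simp only [G.toPerm_apply]
      rfl
    rw [hfold]
    have hinit : ∀ b, initState n m x b = mkState n m x b (fun _ _ => false) := by
      intro b
      funext i
      simp [initState, mkState]
    have hAB : ∀ b, mkState n m x b (fA L x m) = mkState n m x b (fB L x 0) := by
      intro b
      refine congrArg _ ?_
      funext j k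
      simp [fA, fB, j.isLt]
    have hPfwd : ∀ b, evalsA P (mkState n m x b (fun _ _ => false))
        = mkState n m x b (fB L x 0) := by
      intro b
      rw [hPdef, phase1_sem L x b m le_rfl, hAB b]
    have hAfwd : ∀ b, evalsA A (mkState n m x b (fB L x 0))
        = mkState n m x b (fB L x m) := by
      intro b
      rw [hAdef, phase2_sem L x b m le_rfl]
    have hmid : evalsA [mid] (mkState n m x a (fB L x m))
        = mkState n m x (xor a (evalCNF L x)) (fB L x m) := by
      simp only [evalsA, List.foldl_cons, List.foldl_nil]
      rw [hmiddef, apply_cnot_a_t,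
        fB_read_five L x m ⟨m - 1, by omega⟩ (by show m - 1 < m; omega)]
      have hd : dval L x ((⟨m - 1, by omega⟩ : Fin m) : ℕ) = evalCNF L x := dval_last L x hm0
      rw [hd, Bool.xor_comm]
    have hArev : evalsA A.reverse (mkState n m x (xor a (evalCNF L x)) (fB L x m))
        = mkState n m x (xor a (evalCNF L x)) (fB L x 0) := by
      rw [← hAfwd (xor a (evalCNF L x))]
      exact evalsA_reverse_undo A _
    have hPrev : evalsA P.reverse (mkState n m x (xor a (evalCNF L x)) (fB L x 0))
        = mkState n m x (xor a (evalCNF L x)) (fun _ _ => false) := by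
      rw [← hPfwd (xor a (evalCNF L x))]
      exact evalsA_reverse_undo P _
    rw [hinit a, evalsA_append, evalsA_append, evalsA_append, evalsA_append,
      hPfwd a, hAfwd a, hmid, hArev, hPrev, ← hinit (xor a (evalCNF L x))]
end
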